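/- Let ρ^{AB} be a density operator on C^d ⊗ H_B with marginal ρ^B, and consider any dense-coding code consisting of M states ρ_i^{AB} = (E_i ⊗ id)ρ^{AB} (with E_i CPTP on A) and a POVM {F_i}_{i=1}^M on AB (F_i ≥ 0, Σ F_i ≤ I). Then the average success probability satisfies (1/M) Σ_i Tr[F_i ρ_i^{AB}] ≤ max_i Tr[{ρ_i^{AB} ≥ e^{−γ} I_A ⊗ ρ^B}(ρ_i^{AB} − e^{−γ} I_A ⊗ ρ^B)] + (d·e^{−γ})/M · d^{0}, i.e., ≤ max_i Tr[Π_i(γ)] + e^{(log d − γ)}/M, where Π_i(γ) = {ρ_i^{AB} ≥ e^{−γ} I_A ⊗ ρ^B}(ρ_i^{AB} − e^{−γ} I_A ⊗ ρ^B). -/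

import Mathlib

open Matrix Kronecker BigOperators
open scoped ComplexOrder

/-- Projection onto the nonnegative eigenspace of a Hermitian matrix
(junk value `0` if the matrix is not Hermitian). -/
noncomputable def posProj {n : Type*} [Fintype n] [DecidableEq n]
    (X : Matrix n n ℂ) : Matrix n n ℂ :=
  if hX : X.IsHermitian then
    (hX.eigenvectorUnitary : Matrix n n ℂ) *
      Matrix.diagonal (fun i => if (0:ℝ) ≤ hX.eigenvalues i then (1:ℂ) else 0) *
      star (hX.eigenvectorUnitary : Matrix n n ℂ)
  else 0

/-- Functional calculus logarithm of a Hermitian matrix, with the convention `log 0 = 0`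
(junk value `0` if the matrix is not Hermitian). -/
noncomputable def matLog {n : Type*} [Fintype n] [DecidableEq n]
    (M : Matrix n n ℂ) : Matrix n n ℂ :=
  if hM : M.IsHermitian then
    (hM.eigenvectorUnitary : Matrix n n ℂ) *
      Matrix.diagonal (fun i => (Real.log (hM.eigenvalues i) : ℂ)) *
      star (hM.eigenvectorUnitary : Matrix n n ℂ)
  else 0

/-- von Neumann entropy `-Tr[M log M] = -∑ λᵢ log λᵢ` (convention `0 log 0 = 0`). -/
noncomputable def vNEntropy {n : Type*} [Fintype n] [DecidableEq n]
    (M : Matrix n n ℂ) : ℝ :=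
  if hM : M.IsHermitian then -∑ i, hM.eigenvalues i * Real.log (hM.eigenvalues i) else 0

/-- A density operator: positive semidefinite with unit trace. -/
def IsDensityOp {n : Type*} [Fintype n] [DecidableEq n] (ρ : Matrix n n ℂ) : Prop :=
  ρ.PosSemidef ∧ ρ.trace = 1

/-- Partial trace over the first tensor factor. -/
noncomputable def traceA {a b : ℕ} (M : Matrix (Fin a × Fin b) (Fin a × Fin b) ℂ) :
    Matrix (Fin b) (Fin b) ℂ :=
  Matrix.of fun j j' => ∑ i, M (i, j) (i, j')

/-- Partial trace over the second tensor factor. -/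
noncomputable def traceB {a b : ℕ} (M : Matrix (Fin a × Fin b) (Fin a × Fin b) ℂ) :
    Matrix (Fin a) (Fin a) ℂ :=
  Matrix.of fun i i' => ∑ j, M (i, j) (i', j)

/-- `n`-fold tensor (Kronecker) power of a matrix. -/
noncomputable def tensorPow {d : ℕ} (ϑ : Matrix (Fin d) (Fin d) ℂ) (n : ℕ) :
    Matrix (Fin n → Fin d) (Fin n → Fin d) ℂ :=
  Matrix.of fun f g => ∏ i, ϑ (f i) (g i)


section Aux
set_option linter.unusedSectionVars false
variable {n : Type*} [Fintype n] [DecidableEq n]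


lemma diag_nonneg' {A : Matrix n n ℂ} (hA : A.PosSemidef) (i : n) : 0 ≤ A i i := by
  exact hA.diag_nonneg

lemma trace_psd_nonneg {A : Matrix n n ℂ} (hA : A.PosSemidef) : 0 ≤ A.trace :=
  Finset.sum_nonneg fun i _ => diag_nonneg' hA i

lemma trace_mul_psd_nonneg {A B : Matrix n n ℂ} (hA : A.PosSemidef) (hB : B.PosSemidef) :
    0 ≤ (A * B).trace := by
  obtain ⟨S, rfl⟩ : ∃ S : Matrix n n ℂ, A = star S * S := by
    open scoped MatrixOrder in exact CStarAlgebra.nonneg_iff_eq_star_mul_self.mp hA.nonneg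
  have h2 : (star S * S * B).trace = (S * B * Sᴴ).trace := by
    rw [Matrix.mul_assoc, Matrix.trace_mul_comm]; rfl
  rw [h2]
  exact trace_psd_nonneg (hB.mul_mul_conjTranspose_same _)


lemma key_lemma {X F : Matrix n n ℂ} (hX : X.IsHermitian) (hF : F.PosSemidef)
    (hF1 : ((1 : Matrix n n ℂ) - F).PosSemidef) :
    ((F * X).trace).re ≤ ((posProj X * X).trace).re := by
  set U : Matrix n n ℂ := (hX.eigenvectorUnitary : Matrix n n ℂ) with hU
  set ev : n → ℝ := hX.eigenvalues with hev
  have hUU : star U * U = 1 := Matrix.mem_unitaryGroup_iff'.mp hX.eigenvectorUnitary.2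
  have hUU' : U * star U = 1 := Matrix.mem_unitaryGroup_iff.mp hX.eigenvectorUnitary.2
  set D : Matrix n n ℂ := Matrix.diagonal (fun i => (ev i : ℂ)) with hD
  set P : Matrix n n ℂ := Matrix.diagonal (fun i => if (0:ℝ) ≤ ev i then (1:ℂ) else 0) with hP
  have hspec : X = U * D * star U := by
    exact hX.spectral_theorem
  set G : Matrix n n ℂ := star U * F * U with hG
  have hGpsd : G.PosSemidef := by
    have := hF.conjTranspose_mul_mul_same U
    rw [hG]; simpa [Matrix.star_eq_conjTranspose] using this
  have hGle : ((1 : Matrix n n ℂ) - G).PosSemidef := by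
    have := hF1.conjTranspose_mul_mul_same U
    have e : Uᴴ * ((1 : Matrix n n ℂ) - F) * U = 1 - G := by
      rw [Matrix.mul_sub, Matrix.mul_one, Matrix.sub_mul, ← Matrix.star_eq_conjTranspose, hUU, hG]
    rwa [e] at this
  -- trace computation for LHS
  have hLHS : (F * X).trace = ∑ k, G k k * (ev k : ℂ) := by
    conv_lhs => rw [hspec]
    have assoc : F * (U * D * star U) = U * (G * D) * star U := by
      calc F * (U * D * star U) = (U * star U) * F * (U * D * star U) := by
            rw [hUU', Matrix.one_mul]
        _ = U * (G * D) * star U := by rw [hG]; simp only [Matrix.mul_assoc]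
    rw [assoc, Matrix.trace_mul_cycle, ← Matrix.mul_assoc, hUU, Matrix.one_mul]
    simp [Matrix.trace, hD, Matrix.mul_diagonal]
  -- trace computation for RHS
  have e1 : posProj X = U * P * star U := by rw [posProj, dif_pos hX]
  have hRHS : (posProj X * X).trace
      = ∑ k, (if (0:ℝ) ≤ ev k then (ev k : ℂ) else 0) := by
    rw [e1]
    conv_lhs => rw [hspec]
    have assoc : U * P * star U * (U * D * star U) = U * (P * (star U * U) * D) * star U := by
      simp only [Matrix.mul_assoc]
    rw [assoc, hUU, Matrix.mul_one, Matrix.trace_mul_cycle, ← Matrix.mul_assoc, hUU,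
      Matrix.one_mul]
    simp [Matrix.trace, hP, hD, Matrix.diagonal_mul_diagonal, Matrix.diagonal_apply_eq, ite_mul]
  rw [hLHS, hRHS, Complex.re_sum, Complex.re_sum]
  apply Finset.sum_le_sum
  intro k _
  have h0 : 0 ≤ G k k := diag_nonneg' hGpsd k
  have h1 : G k k ≤ 1 := by
    have h := diag_nonneg' hGle k
    have e : ((1 : Matrix n n ℂ) - G) k k = 1 - G k k := by
      simp [Matrix.sub_apply, Matrix.one_apply]
    rw [e] at h
    exact le_of_sub_nonneg h
  have h0' : 0 ≤ (G k k).re := (Complex.le_def.mp h0).1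
  have h1' : (G k k).re ≤ 1 := by simpa using (Complex.le_def.mp h1).1
  have hre : (G k k * (ev k : ℂ)).re = (G k k).re * ev k := by
    simp [Complex.mul_re]
  rw [hre]
  by_cases hc : (0:ℝ) ≤ ev k
  · rw [if_pos hc]
    simpa using mul_le_of_le_one_left hc h1'
  · rw [if_neg hc]
    push_neg at hc
    simpa using mul_nonpos_of_nonneg_of_nonpos h0' hc.le

lemma posSemidef_sum {ι : Type*} (s : Finset ι) (f : ι → Matrix n n ℂ)
    (h : ∀ i ∈ s, (f i).PosSemidef) : (∑ i ∈ s, f i).PosSemidef := by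
  classical
  induction s using Finset.induction_on with
  | empty => simpa using Matrix.PosSemidef.zero
  | insert _ _ hnotmem ih =>
    rw [Finset.sum_insert hnotmem]
    exact (h _ (Finset.mem_insert_self _ _)).add
      (ih fun i hi => h i (Finset.mem_insert_of_mem hi))


lemma traceA_posSemidef {a b : ℕ} {M : Matrix (Fin a × Fin b) (Fin a × Fin b) ℂ}
    (hM : M.PosSemidef) : (traceA M).PosSemidef := by
  refine Matrix.PosSemidef.of_dotProduct_mulVec_nonneg ?_ ?_
  · refine Matrix.ext fun j j' => ?_
    simp only [traceA, Matrix.conjTranspose_apply, Matrix.of_apply, star_sum]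
    refine Finset.sum_congr rfl fun i _ => ?_
    exact hM.1.apply (i, j) (i, j')
  · intro x
    set y : Fin a → (Fin a × Fin b → ℂ) :=
      fun i => fun p => if p.1 = i then x p.2 else 0 with hy
    have rhs_eq : ∀ i : Fin a,
        star (y i) ⬝ᵥ M *ᵥ y i = ∑ j, ∑ j', star (x j) * M (i,j) (i,j') * x j' := by
      intro i
      simp only [dotProduct, Matrix.mulVec, Pi.star_apply, Fintype.sum_prod_type, hy]
      rw [Finset.sum_eq_single i (fun i1 _ hi1 => by simp [hi1]) (by simp)]
      refine Finset.sum_congr rfl fun j _ => ?_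
      rw [Finset.sum_eq_single i (fun i2 _ hi2 => by simp [hi2]) (by simp)]
      simp [Finset.mul_sum, mul_assoc]
    have lhs_eq : star x ⬝ᵥ (traceA M) *ᵥ x
        = ∑ i : Fin a, ∑ j, ∑ j', star (x j) * M (i,j) (i,j') * x j' := by
      simp only [dotProduct, Matrix.mulVec, traceA, Matrix.of_apply, Pi.star_apply,
        Finset.sum_mul, Finset.mul_sum]
      calc ∑ x_1 : Fin b, ∑ x_2 : Fin b, ∑ i : Fin a, star (x x_1) * (M (i, x_1) (i, x_2) * x x_2)
          = ∑ x_1 : Fin b, ∑ i : Fin a, ∑ x_2 : Fin b, star (x x_1) * (M (i, x_1) (i, x_2) * x x_2) :=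
            Finset.sum_congr rfl fun _ _ => Finset.sum_comm
        _ = ∑ i : Fin a, ∑ x_1 : Fin b, ∑ x_2 : Fin b, star (x x_1) * (M (i, x_1) (i, x_2) * x x_2) :=
            Finset.sum_comm
        _ = ∑ i : Fin a, ∑ j : Fin b, ∑ j' : Fin b, star (x j) * M (i,j) (i,j') * x j' := by
            simp [mul_assoc]
    rw [lhs_eq]
    refine Finset.sum_nonneg fun i _ => ?_
    rw [← rhs_eq i]
    exact hM.dotProduct_mulVec_nonneg (y i)

lemma traceA_trace {a b : ℕ} (M : Matrix (Fin a × Fin b) (Fin a × Fin b) ℂ) :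
    (traceA M).trace = M.trace := by
  simp only [Matrix.trace, traceA, Matrix.diag, Matrix.of_apply, Fintype.sum_prod_type]
  exact Finset.sum_comm

lemma kron_conjTranspose {p q : Type*} [Fintype p] [Fintype q]
    (A : Matrix p p ℂ) (B : Matrix q q ℂ) : (A ⊗ₖ B)ᴴ = Aᴴ ⊗ₖ Bᴴ := by
  ext ⟨i, j⟩ ⟨i', j'⟩
  simp [Matrix.conjTranspose_apply, Matrix.kroneckerMap_apply]

lemma kron_posSemidef {p q : ℕ} {A : Matrix (Fin p) (Fin p) ℂ} {B : Matrix (Fin q) (Fin q) ℂ}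
    (hA : A.PosSemidef) (hB : B.PosSemidef) : (A ⊗ₖ B).PosSemidef := by
  exact hA.kronecker hB
end Aux

theorem dense_coding_success_bound {d b : ℕ} (hd : 0 < d)
    (ρAB : Matrix (Fin d × Fin b) (Fin d × Fin b) ℂ) (hρ : IsDensityOp ρAB)
    (ρB : Matrix (Fin b) (Fin b) ℂ) (hρB : ρB = traceA ρAB)
    (M : ℕ) (hM : 0 < M) (m : ℕ)
    (K : Fin M → Fin m → Matrix (Fin d) (Fin d) ℂ)
    (hK : ∀ i, ∑ k, (K i k)ᴴ * K i k = 1)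
    (ρi : Fin M → Matrix (Fin d × Fin b) (Fin d × Fin b) ℂ)
    (hρi : ∀ i, ρi i = ∑ k,
        ((K i k) ⊗ₖ (1 : Matrix (Fin b) (Fin b) ℂ)) * ρAB * ((K i k) ⊗ₖ (1 : Matrix (Fin b) (Fin b) ℂ))ᴴ)
    (F : Fin M → Matrix (Fin d × Fin b) (Fin d × Fin b) ℂ)
    (hF : ∀ i, (F i).PosSemidef) (hFsum : ((1 : Matrix (Fin d × Fin b) (Fin d × Fin b) ℂ) - ∑ i, F i).PosSemidef)
    (γ : ℝ) :
    (M : ℝ)⁻¹ * ∑ i, ((F i * ρi i).trace).re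
      ≤ Finset.univ.sup' ⟨⟨0, hM⟩, Finset.mem_univ _⟩
          (fun i => ((posProj (ρi i - (Real.exp (-γ) : ℂ) • ((1 : Matrix (Fin d) (Fin d) ℂ) ⊗ₖ ρB))
            * (ρi i - (Real.exp (-γ) : ℂ) • ((1 : Matrix (Fin d) (Fin d) ℂ) ⊗ₖ ρB))).trace).re)
        + Real.exp (Real.log d - γ) / M := by
  classical
  set c : ℝ := Real.exp (-γ) with hc
  set σ' : Matrix (Fin d × Fin b) (Fin d × Fin b) ℂ := (1 : Matrix (Fin d) (Fin d) ℂ) ⊗ₖ ρB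
    with hσ'
  set X : Fin M → Matrix (Fin d × Fin b) (Fin d × Fin b) ℂ := fun i => ρi i - (c : ℂ) • σ'
    with hX
  have hρB_psd : ρB.PosSemidef := hρB ▸ traceA_posSemidef hρ.1
  have hρB_tr : ρB.trace = 1 := by rw [hρB, traceA_trace, hρ.2]
  have hσ'psd : σ'.PosSemidef := kron_posSemidef Matrix.PosSemidef.one hρB_psd
  have hσ'tr : σ'.trace = (d : ℂ) := by
    rw [hσ', Matrix.trace_kronecker, Matrix.trace_one, hρB_tr, mul_one]
    simp
  have hρi_psd : ∀ i, (ρi i).PosSemidef := fun i => by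
    rw [hρi i]
    exact posSemidef_sum _ _ fun k _ => hρ.1.mul_mul_conjTranspose_same _
  have hXherm : ∀ i, (X i).IsHermitian := fun i => by
    refine (hρi_psd i).1.sub ?_
    have : ((c : ℂ) • σ')ᴴ = (c : ℂ) • σ'ᴴ := by
      rw [Matrix.conjTranspose_smul]
      simp [Complex.star_def, Complex.conj_ofReal]
    rw [Matrix.IsHermitian, this, hσ'psd.1.eq]
  have hF1 : ∀ i, ((1 : Matrix (Fin d × Fin b) (Fin d × Fin b) ℂ) - F i).PosSemidef := fun i => by
    have hsum : ∑ j, F j = F i + ∑ j ∈ Finset.univ.erase i, F j :=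
      (Finset.add_sum_erase _ _ (Finset.mem_univ i)).symm
    have e : (1 : Matrix (Fin d × Fin b) (Fin d × Fin b) ℂ) - F i
        = (1 - ∑ j, F j) + ∑ j ∈ Finset.univ.erase i, F j := by
      rw [hsum]; abel
    rw [e]
    exact hFsum.add (posSemidef_sum _ _ fun j _ => hF j)
  set sup : ℝ := Finset.univ.sup' ⟨⟨0, hM⟩, Finset.mem_univ _⟩
      (fun i => ((posProj (X i) * (X i)).trace).re) with hsup
  -- decompose each trace
  have hdecomp : ∀ i, ((F i * ρi i).trace).re
      = ((F i * X i).trace).re + c * ((F i * σ').trace).re := fun i => by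
    have e : F i * ρi i = F i * X i + (c : ℂ) • (F i * σ') := by
      rw [hX]
      simp [Matrix.mul_sub, Matrix.mul_smul, sub_add_cancel]
    rw [e, Matrix.trace_add, Matrix.trace_smul, Complex.add_re]
    congr 1
    simp [Complex.smul_re]
  have hkey : ∀ i, ((F i * X i).trace).re ≤ sup := fun i => by
    refine le_trans (key_lemma (hXherm i) (hF i) (hF1 i)) ?_
    exact Finset.le_sup' (fun i => ((posProj (X i) * (X i)).trace).re) (Finset.mem_univ i)
  -- bound on the σ' part
  have hσbound : ∑ i, ((F i * σ').trace).re ≤ d := by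
    have e : ∑ i, ((F i * σ').trace).re = (((∑ i, F i) * σ').trace).re := by
      rw [Finset.sum_mul, Matrix.trace_sum, Complex.re_sum]
    rw [e]
    have h2 : 0 ≤ ((((1 : Matrix (Fin d × Fin b) (Fin d × Fin b) ℂ) - ∑ i, F i) * σ').trace) :=
      trace_mul_psd_nonneg hFsum hσ'psd
    have h3 : ((1 : Matrix (Fin d × Fin b) (Fin d × Fin b) ℂ) - ∑ i, F i) * σ'
        = σ' - (∑ i, F i) * σ' := by rw [Matrix.sub_mul, Matrix.one_mul]
    rw [h3, Matrix.trace_sub, hσ'tr] at h2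
    have := (Complex.le_def.mp h2).1
    simpa using this
  have hcpos : (0:ℝ) < c := Real.exp_pos _
  have hmain : ∑ i, ((F i * ρi i).trace).re ≤ M * sup + c * d := by
    calc ∑ i, ((F i * ρi i).trace).re
        = ∑ i, (((F i * X i).trace).re + c * ((F i * σ').trace).re) :=
          Finset.sum_congr rfl fun i _ => hdecomp i
      _ = (∑ i, ((F i * X i).trace).re) + c * ∑ i, ((F i * σ').trace).re := by
          rw [Finset.sum_add_distrib, Finset.mul_sum]
      _ ≤ (∑ _i : Fin M, sup) + c * d :=
          add_le_add (Finset.sum_le_sum fun i _ => hkey i)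
            (mul_le_mul_of_nonneg_left hσbound hcpos.le)
      _ = M * sup + c * d := by simp [mul_comm]
  have hcd : c * d = Real.exp (Real.log d - γ) := by
    rw [Real.exp_sub, Real.exp_log (by exact_mod_cast hd), hc, Real.exp_neg]
    field_simp
  have hMpos : (0:ℝ) < M := by exact_mod_cast hM
  calc (M : ℝ)⁻¹ * ∑ i, ((F i * ρi i).trace).re
      ≤ (M : ℝ)⁻¹ * (M * sup + c * d) :=
        mul_le_mul_of_nonneg_left hmain (by positivity)
    _ = sup + Real.exp (Real.log d - γ) / M := by
        rw [← hcd]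
        field_simp
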